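/- Let r : [0,1] → ℝ be continuous, let G : [0,1] → ℝ be continuous and nondecreasing, and let v ∈ (0,1) satisfy G(v) = r(v), G(u) > r(u) for all u ∈ (0,v), and G(u) < r(u) for all u ∈ (v,1]. Assume G and r are both differentiable at v with r'(v) > G'(v). Let H : [0,1] → ℝ be continuous and for each t > 0 let H_t : [0,1] → ℝ be right-continuous with left limits with ‖H_t − H‖_∞ → 0 as t → 0⁺. Then for all sufficiently small t > 0 the set {u ∈ [0,1] : G(u) + t·H_t(u) ≥ r(u)} is nonempty, and, denoting its supremum by v_t, one has (v_t − v)/t → H(v)/(r'(v) − G'(v)) as t → 0⁺. -/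

import Mathlib

open Filter Set

/-- A cadlag function on `[0,1]`: right-continuous on `[0,1)` and with left limits
at every point of `(0,1]`. -/
def Cadlag (f : ℝ → ℝ) : Prop :=
  (∀ x ∈ Set.Ico (0:ℝ) 1, ContinuousWithinAt f (Set.Ici x) x) ∧
  (∀ x ∈ Set.Ioc (0:ℝ) 1, ∃ l, Filter.Tendsto f (nhdsWithin x (Set.Iio x)) (nhds l))

/-- Convergence in sup norm on `[0,1]` as `t → 0⁺`. -/
def SupConv (Ht : ℝ → ℝ → ℝ) (H : ℝ → ℝ) : Prop :=
  ∀ ε > (0:ℝ), ∀ᶠ t in nhdsWithin (0:ℝ) (Set.Ioi 0),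
    ∀ x ∈ Set.Icc (0:ℝ) 1, |Ht t x - H x| ≤ ε

/-- Hadamard differentiability (tangentially to continuous functions)
of the thresholding map `F ↦ sup{u ∈ [0,1] : F(u) ≥ r(u)}` at `G`:
`(v_t − v)/t → H(v)/(r'(v) − G'(v))`, where `v_t` is the threshold of
`G + t·H_t`. -/
theorem stmt_5 (r G : ℝ → ℝ) (v g' r' : ℝ) (H : ℝ → ℝ) (Ht : ℝ → ℝ → ℝ)
    (hr : ContinuousOn r (Set.Icc 0 1))
    (hGc : ContinuousOn G (Set.Icc 0 1))
    (hGmono : MonotoneOn G (Set.Icc 0 1))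
    (hv : v ∈ Set.Ioo (0:ℝ) 1)
    (hcross : G v = r v)
    (hbelow : ∀ u ∈ Set.Ioo (0:ℝ) v, G u > r u)
    (habove : ∀ u ∈ Set.Ioc v 1, G u < r u)
    (hG' : HasDerivWithinAt G g' (Set.Icc 0 1) v)
    (hr' : HasDerivWithinAt r r' (Set.Icc 0 1) v)
    (hslope : r' > g')
    (hHc : ContinuousOn H (Set.Icc 0 1))
    (hHt : ∀ t ∈ Set.Ioi (0:ℝ), Cadlag (Ht t))
    (hconv : SupConv Ht H) :
    (∀ᶠ t in nhdsWithin (0:ℝ) (Set.Ioi 0),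
      {u ∈ Set.Icc (0:ℝ) 1 | G u + t * Ht t u ≥ r u}.Nonempty) ∧
    Filter.Tendsto
      (fun t => (sSup {u ∈ Set.Icc (0:ℝ) 1 | G u + t * Ht t u ≥ r u} - v) / t)
      (nhdsWithin (0:ℝ) (Set.Ioi 0)) (nhds (H v / (r' - g'))) := by
  obtain ⟨hv0, hv1⟩ := hv
  set D := r' - g' with hD
  have hDpos : 0 < D := sub_pos.2 hslope
  set c := H v / D with hc
  have hDc : D * c = H v := by
    rw [hc]; field_simp
  clear_value c D
  have hvI : v ∈ Set.Icc (0:ℝ) 1 := ⟨hv0.le, hv1.le⟩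
  have hφ : HasDerivWithinAt (fun u => G u - r u) (g' - r') (Set.Icc 0 1) v := hG'.sub hr'
  obtain ⟨M, hM⟩ := isCompact_Icc.exists_bound_of_continuousOn hHc
  have hM0 : 0 ≤ M := le_trans (norm_nonneg _) (hM v hvI)
  have hsmall : ∀ q > (0:ℝ), ∀ᶠ t in nhdsWithin (0:ℝ) (Set.Ioi 0), t < q := fun q hq =>
    (Filter.eventually_of_mem (Iio_mem_nhds hq) (fun x hx => hx)).filter_mono nhdsWithin_le_nhds
  -- key estimate
  have key : ∀ ε > (0:ℝ), ∀ᶠ t in nhdsWithin (0:ℝ) (Set.Ioi 0),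
      (v + t*(c-ε) ∈ {u ∈ Set.Icc (0:ℝ) 1 | G u + t * Ht t u ≥ r u}) ∧
      ∀ u ∈ {u ∈ Set.Icc (0:ℝ) 1 | G u + t * Ht t u ≥ r u}, u ≤ v + t*(c+ε) := by
    intro ε hε
    set K := 2 + |c| + ε with hK
    have hKpos : 0 < K := by rw [hK]; linarith [abs_nonneg c]
    set ε' := min (D/2) (D*ε/(2*K)) with hε'def
    have hε'pos : 0 < ε' :=
      lt_min (half_pos hDpos) (div_pos (mul_pos hDpos hε) (by linarith))
    have hε'le : ε' ≤ D/2 := min_le_left _ _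
    have hε'le2 : ε' ≤ D*ε/(2*K) := min_le_right _ _
    clear_value ε' K
    have hε'K : ε' * K < D * ε := by
      have h1 : ε' * K ≤ (D*ε/(2*K)) * K :=
        mul_le_mul_of_nonneg_right hε'le2 hKpos.le
      have h2 : (D*ε/(2*K)) * K = D*ε/2 := by
        field_simp
      have h3 : 0 < D*ε := mul_pos hDpos hε
      have h12 : ε' * K ≤ D*ε/2 := h1.trans_eq h2
      linarith
    have hKK : ε' * K = 2*ε' + ε'*|c| + ε'*ε := by rw [hK]; ring
    -- local (slope + continuity of H) estimate near v
    have hsl := (hasDerivWithinAt_iff_isLittleO.1 hφ).def hε'pos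
    have hHev : ∀ᶠ u in nhdsWithin v (Set.Icc 0 1), |H u - H v| ≤ ε' := by
      have h := Metric.tendsto_nhds.1 (hHc v hvI).tendsto ε' hε'pos
      filter_upwards [h] with u hu
      rw [Real.dist_eq] at hu; exact hu.le
    have hboth := hsl.and hHev
    rw [Filter.eventually_iff, Metric.mem_nhdsWithin_iff] at hboth
    obtain ⟨δ', hδ'pos, hδ'⟩ := hboth
    set δ0 := min (δ'/2) (min (v/2) ((1-v)/2)) with hδ0def
    have hδ0pos : 0 < δ0 :=
      lt_min (half_pos hδ'pos) (lt_min (half_pos hv0) (half_pos (show (0:ℝ) < 1 - v by linarith)))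
    have hδ0v : δ0 ≤ v/2 := le_trans (min_le_right _ _) (min_le_left _ _)
    have hδ0v1 : δ0 ≤ (1-v)/2 := le_trans (min_le_right _ _) (min_le_right _ _)
    have hδ0δ : δ0 < δ' := lt_of_le_of_lt (min_le_left _ _) (by linarith)
    clear_value δ0
    have hnear : ∀ u ∈ Set.Icc (0:ℝ) 1, |u - v| ≤ δ0 →
        |(G u - r u) + D*(u-v)| ≤ ε' * |u-v| ∧ |H u - H v| ≤ ε' := by
      intro u huI hud
      have hd : dist u v < δ' := by rw [Real.dist_eq]; linarith
      obtain ⟨h1, h2⟩ := hδ' ⟨Metric.mem_ball.2 hd, huI⟩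
      refine ⟨?_, h2⟩
      have heq : (G u - r u) - (G v - r v) - (u - v) • (g' - r') = (G u - r u) + D*(u-v) := by
        rw [hcross, smul_eq_mul, hD]; ring
      rw [Real.norm_eq_abs, Real.norm_eq_abs, heq] at h1
      exact h1
    -- far region minimum
    have hsub : Set.Icc (v+δ0) 1 ⊆ Set.Icc (0:ℝ) 1 := Set.Icc_subset_Icc (by linarith) le_rfl
    have hfarne : (Set.Icc (v+δ0) 1).Nonempty := ⟨1, by constructor <;> linarith⟩
    obtain ⟨x0, hx0, hx0min⟩ := isCompact_Icc.exists_isMinOn hfarne ((hr.sub hGc).mono hsub)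
    set m := r x0 - G x0 with hm
    have hmpos : 0 < m :=
      sub_pos.2 (habove x0 ⟨lt_of_lt_of_le (by linarith) hx0.1, hx0.2⟩)
    clear_value m
    have hce : |c - ε| ≤ |c| + ε := by
      cases' abs_cases (c - ε) with h h <;> cases' abs_cases c with h2 h2 <;> linarith
    have hcep : |c + ε| ≤ |c| + ε := by
      cases' abs_cases (c + ε) with h h <;> cases' abs_cases c with h2 h2 <;> linarith
    filter_upwards [hconv ε' hε'pos,
      hsmall (δ0/(|c|+ε+1)) (div_pos hδ0pos (by linarith [abs_nonneg c])),
      hsmall (m/(M+ε'+1)) (div_pos hmpos (by linarith)),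
      self_mem_nhdsWithin] with t he ht1 ht2 htpos
    rw [Set.mem_Ioi] at htpos
    rw [lt_div_iff₀ (by linarith [abs_nonneg c])] at ht1
    rw [lt_div_iff₀ (by linarith)] at ht2
    have htce : t * |c - ε| < δ0 :=
      lt_of_le_of_lt (mul_le_mul_of_nonneg_left (by linarith) htpos.le) ht1
    have htcep : t * |c + ε| < δ0 :=
      lt_of_le_of_lt (mul_le_mul_of_nonneg_left (by linarith) htpos.le) ht1
    have ht2' : t * (M + ε') < m := by linarith
    constructor
    · -- membership of v + t*(c-ε)
      have habsv : |t*(c-ε)| = t * |c-ε| := by rw [abs_mul, abs_of_pos htpos]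
      have hrange : -δ0 < t*(c-ε) ∧ t*(c-ε) < δ0 := by
        constructor
        · linarith [neg_abs_le (t*(c-ε)), habsv, htce]
        · linarith [le_abs_self (t*(c-ε)), habsv, htce]
      have hmemI : v + t*(c-ε) ∈ Set.Icc (0:ℝ) 1 := by
        constructor <;> [linarith [hrange.1]; linarith [hrange.2]]
      have hsimp : v + t*(c-ε) - v = t*(c-ε) := by ring
      have habs : |v + t*(c-ε) - v| ≤ δ0 := by rw [hsimp, habsv]; exact htce.le
      obtain ⟨hn1, hn2⟩ := hnear (v + t*(c-ε)) hmemI habs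
      rw [hsimp, habsv] at hn1
      refine ⟨hmemI, ?_⟩
      have A1 := (abs_le.1 hn1).1
      have A2 := (abs_le.1 hn2).1
      have A3 := (abs_le.1 (he (v + t*(c-ε)) hmemI)).1
      have A4 : t*(H v - 2*ε') ≤ t * Ht t (v + t*(c-ε)) :=
        mul_le_mul_of_nonneg_left (by linarith) htpos.le
      have B1 : ε' * (t * |c-ε|) ≤ ε' * (t * (|c|+ε)) :=
        mul_le_mul_of_nonneg_left (mul_le_mul_of_nonneg_left hce htpos.le) hε'pos.le
      have B2 : t*(ε'*K) ≤ t*(D*ε) := mul_le_mul_of_nonneg_left hε'K.le htpos.le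
      have B3 : t*(D*c) = t*(H v) := by rw [hDc]
      have B4 : t * (ε' * K) = t * (2*ε' + ε'*|c| + ε'*ε) := by rw [hKK]
      linarith [A1, A4, B1, B2, B3, B4]
    · -- upper bound on members
      intro u hu
      obtain ⟨huI, hugeq⟩ := hu
      by_contra hcon
      push_neg at hcon
      have hHub : Ht t u ≤ H u + ε' := by
        have := (abs_le.1 (he u huI)).2; linarith
      by_cases hfar : v + δ0 < u
      · have huF : u ∈ Set.Icc (v+δ0) 1 := ⟨hfar.le, huI.2⟩
        have hmin : r x0 - G x0 ≤ r u - G u := isMinOn_iff.1 hx0min u huF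
        have hHb : H u ≤ M := by
          have h2 := hM u huI; rw [Real.norm_eq_abs] at h2
          linarith [le_abs_self (H u)]
        have h1 : t * Ht t u ≤ t * (M + ε') :=
          mul_le_mul_of_nonneg_left (by linarith) htpos.le
        linarith [hugeq, hmin, h1, ht2', hm]
      · push_neg at hfar
        have hlb : -δ0 ≤ u - v := by
          have h := neg_abs_le (t*(c+ε))
          rw [abs_mul, abs_of_pos htpos] at h
          linarith [htcep]
        have habs : |u - v| ≤ δ0 := abs_le.2 ⟨hlb, by linarith⟩
        obtain ⟨hn1, hn2⟩ := hnear u huI habs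
        have hφlow : -(t*(H v + 2*ε')) ≤ G u - r u := by
          have h1 : Ht t u ≤ H v + 2*ε' := by
            have := (abs_le.1 hn2).2; linarith
          have h2 : t * Ht t u ≤ t*(H v + 2*ε') :=
            mul_le_mul_of_nonneg_left h1 htpos.le
          linarith [hugeq]
        have hup := (abs_le.1 hn1).2
        have hεc : ε'*c ≤ ε'*|c| := mul_le_mul_of_nonneg_left (le_abs_self c) hε'pos.le
        have hεc' : -(ε'*|c|) ≤ ε'*c := by
          have := mul_le_mul_of_nonneg_left (neg_abs_le c) hε'pos.le
          linarith
        have hcon' : t*(c+ε) < u - v := by linarith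
        by_cases hsgn : v ≤ u
        · rw [abs_of_nonneg (by linarith : (0:ℝ) ≤ u - v)] at hup
          have hy : (D - ε')*(u-v) ≤ t*(H v + 2*ε') := by linarith [hup, hφlow]
          have hD2 : 0 < D - ε' := by linarith
          have hx : (D-ε')*(t*(c+ε)) < (D-ε')*(u-v) := mul_lt_mul_of_pos_left hcon' hD2
          have hz : (D-ε')*(c+ε) < H v + 2*ε' := by
            have hw : t*((D-ε')*(c+ε)) < t*(H v + 2*ε') := by linarith [hx, hy]
            exact lt_of_mul_lt_mul_left hw htpos.le
          linarith [hz, hDc, hεc, hε'K, hKK]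
        · push_neg at hsgn
          rw [abs_of_neg (by linarith : u - v < 0)] at hup
          have hy : (D + ε')*(u-v) ≤ t*(H v + 2*ε') := by linarith [hup, hφlow]
          have hD2 : 0 < D + ε' := by linarith
          have hx : (D+ε')*(t*(c+ε)) < (D+ε')*(u-v) := mul_lt_mul_of_pos_left hcon' hD2
          have hz : (D+ε')*(c+ε) < H v + 2*ε' := by
            have hw : t*((D+ε')*(c+ε)) < t*(H v + 2*ε') := by linarith [hx, hy]
            exact lt_of_mul_lt_mul_left hw htpos.le
          have hεe : 0 ≤ ε'*ε := mul_nonneg hε'pos.le hε.le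
          linarith [hz, hDc, hεc', hε'K, hKK, hεe]
  constructor
  · exact (key 1 one_pos).mono fun t ht => ⟨v + t*(c-1), ht.1⟩
  · rw [Metric.tendsto_nhds]
    intro ε hε
    filter_upwards [key (ε/2) (half_pos hε), self_mem_nhdsWithin] with t ht htpos
    obtain ⟨hmem, hub⟩ := ht
    rw [Set.mem_Ioi] at htpos
    have hbdd : BddAbove {u ∈ Set.Icc (0:ℝ) 1 | G u + t * Ht t u ≥ r u} :=
      BddAbove.mono (Set.sep_subset _ _) bddAbove_Icc
    have hlo := le_csSup hbdd hmem
    have hhi : sSup {u ∈ Set.Icc (0:ℝ) 1 | G u + t * Ht t u ≥ r u} ≤ v + t*(c+ε/2) :=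
      csSup_le (Set.nonempty_of_mem hmem) hub
    rw [Real.dist_eq, abs_lt]
    constructor
    · have h1 : c - ε/2 ≤ (sSup {u ∈ Set.Icc (0:ℝ) 1 | G u + t * Ht t u ≥ r u} - v)/t :=
        (le_div_iff₀ htpos).2 (by linarith)
      linarith
    · have h1 : (sSup {u ∈ Set.Icc (0:ℝ) 1 | G u + t * Ht t u ≥ r u} - v)/t ≤ c + ε/2 :=
        (div_le_iff₀ htpos).2 (by linarith)
      linarith
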